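/- Let H₁, …, H_p be affine hyperplanes in ℝ^m. Then the number of regions of the arrangement (connected components of ℝ^m \ (H₁ ∪ ⋯ ∪ H_p)) is at least the number of distinct nonempty intersection subspaces, i.e., the number of distinct nonempty sets of the form ⋂_{i ∈ F} H_i over subsets F ⊆ {1, …, p}, where the intersection over the empty family is all of ℝ^m. -/

import Mathlib

open Set Function

namespace RegionsLB

noncomputable section

variable {m p n : ℕ}


variable {m p : ℕ}

/-- the linear functional `z ↦ ∑ j, c j * z j`. -/
def lin (c : Fin m → ℝ) (z : Fin m → ℝ) : ℝ := ∑ j, c j * z j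

lemma isLinearMap_lin (c : Fin m → ℝ) : IsLinearMap ℝ (lin c) := by
  constructor
  · intro x y; simp [lin, mul_add, Finset.sum_add_distrib]
  · intro t x; simp [lin, Finset.mul_sum]; ring_nf; simp [mul_comm, mul_left_comm]

lemma lin_add (c x y : Fin m → ℝ) : lin c (x + y) = lin c x + lin c y :=
  (isLinearMap_lin c).map_add x y

lemma lin_smul (c : Fin m → ℝ) (t : ℝ) (x : Fin m → ℝ) : lin c (t • x) = t * lin c x :=
  (isLinearMap_lin c).map_smul t x

lemma lin_smul_left (c : Fin m → ℝ) (t : ℝ) (x : Fin m → ℝ) : lin (t • c) x = t * lin c x := by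
  simp [lin, Finset.mul_sum, mul_assoc]

lemma lin_zero_left (x : Fin m → ℝ) : lin (0 : Fin m → ℝ) x = 0 := by simp [lin]

lemma lin_self_pos {c : Fin m → ℝ} (hc : c ≠ 0) : 0 < lin c c := by
  have h1 : lin c c = ∑ j, (c j) ^ 2 := by simp [lin, sq]
  rw [h1]
  apply Finset.sum_pos'
  · intro i _; positivity
  · obtain ⟨j, hj⟩ : ∃ j, c j ≠ 0 := Function.ne_iff.mp hc
    exact ⟨j, Finset.mem_univ j, by positivity⟩

lemma lin_single (c : Fin m → ℝ) (j : Fin m) : lin c (Pi.single j 1) = c j := by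
  simp [lin, Pi.single_apply, mul_ite]

lemma continuous_lin (c : Fin m → ℝ) : Continuous (lin c) := by
  apply continuous_finset_sum
  intro j _
  exact continuous_const.mul (continuous_apply j)

/-- proportionality from hyperplane inclusion -/
lemma prop_of_subset {c d : Fin m → ℝ} {β γ : ℝ} (hc : c ≠ 0)
    (h : ∀ z, lin c z = β → lin d z = γ) :
    ∃ t : ℝ, d = t • c ∧ γ = t * β := by
  set s := lin c c with hs
  have hs0 : s ≠ 0 := ne_of_gt (lin_self_pos hc)
  set z0 : Fin m → ℝ := (β / s) • c with hz0
  have hz0c : lin c z0 = β := by rw [hz0, lin_smul]; field_simp; rfl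
  have hz0d : lin d z0 = γ := h z0 hz0c
  set t : ℝ := lin d c / s with ht
  have key : ∀ v, lin d v = t * lin c v := by
    intro v
    set v' : Fin m → ℝ := v - (lin c v / s) • c with hv'
    have hv : v = v' + (lin c v / s) • c := by rw [hv']; abel
    have hcv' : lin c v' = 0 := by
      rw [hv']
      have : lin c (v - (lin c v / s) • c) + lin c ((lin c v / s) • c) = lin c v := by
        rw [← lin_add]; congr 1; abel
      rw [lin_smul] at this
      field_simp at this ⊢
      have h' : s * lin c (v - (lin c v / s) • c) = 0 := by rw [← hs] at this; linarith
      rcases mul_eq_zero.mp h' with h'' | h''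
      · exact absurd h'' hs0
      · linarith
    have hdv' : lin d v' = 0 := by
      have h1 : lin c (z0 + v') = β := by rw [lin_add, hz0c, hcv', add_zero]
      have h2 : lin d (z0 + v') = γ := h _ h1
      rw [lin_add, hz0d] at h2; linarith
    calc lin d v = lin d v' + (lin c v / s) * lin d c := by
            rw [← lin_smul, ← lin_add, ← hv]
      _ = t * lin c v := by rw [hdv', ht]; ring
  refine ⟨t, ?_, ?_⟩
  · funext j
    have := key (Pi.single j 1)
    rw [lin_single, lin_single] at this
    simpa using this
  · rw [← hz0d, key z0, hz0c]





/-- sign cell of the arrangement -/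
def cell (a : Fin p → Fin m → ℝ) (b : Fin p → ℝ) (σ : Fin p → Bool) : Set (Fin m → ℝ) :=
  {z | ∀ i, if σ i then b i < lin (a i) z else lin (a i) z < b i}

/-- realized sign vectors -/
def sigs (a : Fin p → Fin m → ℝ) (b : Fin p → ℝ) : Set (Fin p → Bool) :=
  {σ | (cell a b σ).Nonempty}

def flats (a : Fin p → Fin m → ℝ) (b : Fin p → ℝ) : Set (Set (Fin m → ℝ)) :=
  {T | T.Nonempty ∧ ∃ F : Finset (Fin p), T = ⋂ i ∈ F, {z | lin (a i) z = b i}}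

def compl' (a : Fin p → Fin m → ℝ) (b : Fin p → ℝ) : Set (Fin m → ℝ) :=
  {z | ∀ i, lin (a i) z ≠ b i}

lemma cell_eq_iInter (a : Fin p → Fin m → ℝ) (b : Fin p → ℝ) (σ : Fin p → Bool) :
    cell a b σ = ⋂ i, {z | if σ i then b i < lin (a i) z else lin (a i) z < b i} := by
  rw [cell, Set.setOf_forall]

lemma cell_isOpen (a : Fin p → Fin m → ℝ) (b : Fin p → ℝ) (σ : Fin p → Bool) :
    IsOpen (cell a b σ) := by
  rw [cell_eq_iInter]
  apply isOpen_iInter_of_finite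
  intro i
  by_cases h : σ i
  · simp only [h, if_true]
    exact isOpen_lt continuous_const (continuous_lin (a i))
  · simp only [h, if_false]
    exact isOpen_lt (continuous_lin (a i)) continuous_const

lemma cell_convex (a : Fin p → Fin m → ℝ) (b : Fin p → ℝ) (σ : Fin p → Bool) :
    Convex ℝ (cell a b σ) := by
  rw [cell_eq_iInter]
  apply convex_iInter
  intro i
  by_cases h : σ i
  · simp only [h, if_true]
    exact convex_halfSpace_gt (isLinearMap_lin (a i)) (b i)
  · simp only [h, if_false]
    exact convex_halfSpace_lt (isLinearMap_lin (a i)) (b i)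

lemma cell_subset_compl (a : Fin p → Fin m → ℝ) (b : Fin p → ℝ) (σ : Fin p → Bool) :
    cell a b σ ⊆ compl' a b := by
  intro z hz i
  have := hz i
  by_cases h : σ i
  · simp only [h, if_true] at this; exact ne_of_gt this
  · simp only [h, if_false] at this; exact ne_of_lt this

lemma mem_cell_iff {a : Fin p → Fin m → ℝ} {b : Fin p → ℝ} {σ : Fin p → Bool}
    {z : Fin m → ℝ} (hz : z ∈ cell a b σ) (i : Fin p) :
    σ i = true ↔ b i < lin (a i) z := by
  have := hz i
  by_cases h : σ i
  · simp only [h, if_true] at this; simp [h, this]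
  · simp only [h, if_false] at this
    simp only [Bool.not_eq_true] at h
    simp [h, not_lt.mpr (le_of_lt this)]

/-- signs are constant on preconnected subsets of the complement -/
lemma sign_const {a : Fin p → Fin m → ℝ} {b : Fin p → ℝ} {s : Set (Fin m → ℝ)}
    (hs : IsPreconnected s) (hsub : s ⊆ compl' a b) {x y : Fin m → ℝ}
    (hx : x ∈ s) (hy : y ∈ s) (i : Fin p) :
    (b i < lin (a i) x ↔ b i < lin (a i) y) := by
  have key : ∀ u ∈ s, ∀ v ∈ s, b i < lin (a i) u → ¬ b i < lin (a i) v → False := by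
    intro u hu v hv h1 h2
    have hvlt : lin (a i) v < b i := lt_of_le_of_ne (not_lt.mp h2) (hsub hv i)
    have : b i ∈ Set.Icc (lin (a i) v) (lin (a i) u) := ⟨le_of_lt hvlt, le_of_lt h1⟩
    obtain ⟨z, hzs, hz⟩ := hs.intermediate_value hv hu
      ((continuous_lin (a i)).continuousOn) this
    exact hsub hzs i hz
  constructor
  · intro h; by_contra h'; exact key x hx y hy h h'
  · intro h; by_contra h'; exact key y hy x hx h h'

/-- points of the complement in the same connected component have the same signs -/
lemma sign_iff_of_mk_eq {a : Fin p → Fin m → ℝ} {b : Fin p → ℝ}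
    (z1 z2 : ↥(compl' a b))
    (h : ConnectedComponents.mk z1 = ConnectedComponents.mk z2) (i : Fin p) :
    (b i < lin (a i) z1.val ↔ b i < lin (a i) z2.val) := by
  have hcc : connectedComponent z1 = connectedComponent z2 :=
    ConnectedComponents.coe_eq_coe.mp h
  have hz2 : z2 ∈ connectedComponent z1 := hcc ▸ mem_connectedComponent
  set s : Set (Fin m → ℝ) := Subtype.val '' connectedComponent z1 with hsdef
  have hpre : IsPreconnected s :=
    isPreconnected_connectedComponent.image _ continuous_subtype_val.continuousOn
  have hsub : s ⊆ compl' a b := by rintro w ⟨w', _, rfl⟩; exact w'.2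
  exact sign_const hpre hsub (⟨z1, mem_connectedComponent, rfl⟩)
    ⟨z2, hz2, rfl⟩ i

/-- points of the same cell are in the same connected component of the complement -/
lemma mk_eq_of_mem_cell {a : Fin p → Fin m → ℝ} {b : Fin p → ℝ} {σ : Fin p → Bool}
    (z1 z2 : ↥(compl' a b)) (h1 : z1.val ∈ cell a b σ) (h2 : z2.val ∈ cell a b σ) :
    ConnectedComponents.mk z1 = ConnectedComponents.mk z2 := by
  have hpre : IsPreconnected (cell a b σ) := (cell_convex a b σ).isPreconnected
  have hsub := cell_subset_compl a b σ
  have h3 : cell a b σ ⊆ connectedComponentIn (compl' a b) z1.val :=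
    hpre.subset_connectedComponentIn h1 hsub
  have h4 : z2.val ∈ connectedComponentIn (compl' a b) z1.val := h3 h2
  rw [connectedComponentIn_eq_image z1.2] at h4
  obtain ⟨w, hw, hweq⟩ := h4
  have : w = z2 := Subtype.ext hweq
  rw [ConnectedComponents.coe_eq_coe]
  have hz1 : (⟨z1.val, z1.2⟩ : ↥(compl' a b)) = z1 := rfl
  rw [hz1] at hw
  subst this
  exact connectedComponent_eq hw

lemma finite_components (a : Fin p → Fin m → ℝ) (b : Fin p → ℝ) :
    Finite (ConnectedComponents ↥(compl' a b)) := by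
  classical
  set f : ConnectedComponents ↥(compl' a b) → (Fin p → Bool) :=
    fun x => fun i => decide (b i < lin (a i) (Classical.choose
      (ConnectedComponents.surjective_coe x)).val) with hf
  apply Finite.of_injective f
  intro x y hxy
  set zx := Classical.choose (ConnectedComponents.surjective_coe x) with hzx
  have hx : ConnectedComponents.mk zx = x := Classical.choose_spec (ConnectedComponents.surjective_coe x)
  set zy := Classical.choose (ConnectedComponents.surjective_coe y) with hzy
  have hy : ConnectedComponents.mk zy = y := Classical.choose_spec (ConnectedComponents.surjective_coe y)
  -- zx and zy are in the same cell
  set σ : Fin p → Bool := fun i => decide (b i < lin (a i) zx.val) with hσ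
  have hcx : zx.val ∈ cell a b σ := by
    intro i
    by_cases h : b i < lin (a i) zx.val
    · simp [hσ, h]
    · have : lin (a i) zx.val < b i := lt_of_le_of_ne (not_lt.mp h) (zx.2 i)
      simp [hσ, h, this]
  have hcy : zy.val ∈ cell a b σ := by
    intro i
    have hiff : (b i < lin (a i) zx.val) ↔ (b i < lin (a i) zy.val) := by
      have := congrFun hxy i
      simp only [hf, ← hzx, ← hzy] at this
      constructor
      · intro h; by_contra h'; simp [h, h'] at this
      · intro h; by_contra h'; simp [h, h'] at this
    by_cases h : b i < lin (a i) zx.val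
    · simp [hσ, h, hiff.mp h]
    · have h2 : ¬ b i < lin (a i) zy.val := fun hc => h (hiff.mpr hc)
      have : lin (a i) zy.val < b i := lt_of_le_of_ne (not_lt.mp h2) (zy.2 i)
      simp [hσ, h, this]
  rw [← hx, ← hy]
  exact mk_eq_of_mem_cell zx zy hcx hcy

/-- Lemma L1: number of realized sign vectors bounds below the number of components -/
lemma sigs_le_components (a : Fin p → Fin m → ℝ) (b : Fin p → ℝ) :
    (sigs a b).ncard ≤ Nat.card (ConnectedComponents ↥(compl' a b)) := by
  classical
  haveI := finite_components a b
  rw [← Nat.card_coe_set_eq]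
  set g : ↥(sigs a b) → ConnectedComponents ↥(compl' a b) := fun σ =>
    ConnectedComponents.mk ⟨Classical.choose σ.2, cell_subset_compl a b σ.1 (Classical.choose_spec σ.2)⟩
    with hg
  apply Nat.card_le_card_of_injective g
  intro σ τ hστ
  set zσ : ↥(compl' a b) := ⟨Classical.choose σ.2, cell_subset_compl a b σ.1 (Classical.choose_spec σ.2)⟩
  set zτ : ↥(compl' a b) := ⟨Classical.choose τ.2, cell_subset_compl a b τ.1 (Classical.choose_spec τ.2)⟩
  have hmσ : zσ.val ∈ cell a b σ.1 := Classical.choose_spec σ.2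
  have hmτ : zτ.val ∈ cell a b τ.1 := Classical.choose_spec τ.2
  have hmk : ConnectedComponents.mk zσ = ConnectedComponents.mk zτ := hστ
  apply Subtype.ext
  funext i
  have h1 := mem_cell_iff hmσ i
  have h2 := mem_cell_iff hmτ i
  have h3 := sign_iff_of_mk_eq zσ zτ hmk i
  by_cases h : σ.1 i = true
  · rw [h, eq_comm]; rw [h2, ← h3, ← h1]; exact h
  · simp only [Bool.not_eq_true] at h
    rw [h, eq_comm, ← Bool.not_eq_true, h2, ← h3, ← h1]
    simp [h]




/-- perturbation: from a point of an open set, can move along c to adjust the value of lin c -/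
lemma perturb {s : Set (Fin m → ℝ)} (hs : IsOpen s) {z : Fin m → ℝ} (hz : z ∈ s)
    {c : Fin m → ℝ} (hc : c ≠ 0) {β : ℝ} (hβ : lin c z = β) :
    (∃ z1 ∈ s, β < lin c z1) ∧ (∃ z2 ∈ s, lin c z2 < β) := by
  have hcont : Continuous (fun t : ℝ => z + t • c) := by continuity
  have hopen : IsOpen ((fun t : ℝ => z + t • c) ⁻¹' s) := hs.preimage hcont
  have h0 : (0 : ℝ) ∈ (fun t : ℝ => z + t • c) ⁻¹' s := by simp [hz]
  obtain ⟨δ, hδpos, hball⟩ := Metric.isOpen_iff.mp hopen 0 h0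
  have hS : 0 < lin c c := lin_self_pos hc
  have hval : ∀ t : ℝ, lin c (z + t • c) = β + t * lin c c := by
    intro t; rw [lin_add, lin_smul, hβ]
  constructor
  · refine ⟨z + (δ/2) • c, hball ?_, ?_⟩
    · simp only [Metric.mem_ball, Real.dist_eq, sub_zero]
      rw [abs_of_pos (by linarith)]; linarith
    · rw [hval]; nlinarith
  · refine ⟨z + (-(δ/2)) • c, hball ?_, ?_⟩
    · simp only [Metric.mem_ball, Real.dist_eq, sub_zero]
      rw [abs_of_neg (by linarith)]; linarith
    · rw [hval]; nlinarith

lemma perturb_ne {s : Set (Fin m → ℝ)} (hs : IsOpen s) {z : Fin m → ℝ} (hz : z ∈ s)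
    {c : Fin m → ℝ} (hc : c ≠ 0) (β : ℝ) :
    ∃ z1 ∈ s, lin c z1 ≠ β := by
  by_cases h : lin c z = β
  · obtain ⟨⟨z1, hz1, hgt⟩, _⟩ := perturb hs hz hc h
    exact ⟨z1, hz1, ne_of_gt hgt⟩
  · exact ⟨z, hz, h⟩

section Phi

variable (k : Fin (n + 1)) (aL : Fin (n + 1) → ℝ) (bL : ℝ)


/-- parametrization of the hyperplane {lin aL · = bL} by ℝⁿ -/
def phi (w : Fin n → ℝ) : Fin (n + 1) → ℝ :=
  k.insertNth ((bL - ∑ j, aL (k.succAbove j) * w j) / aL k) w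

/-- residual linear functional on the hyperplane -/
def resid (c : Fin (n + 1) → ℝ) : Fin n → ℝ :=
  fun j => c (k.succAbove j) - (c k / aL k) * aL (k.succAbove j)

lemma lin_phi (hk : aL k ≠ 0) (c : Fin (n + 1) → ℝ) (w : Fin n → ℝ) :
    lin c (phi k aL bL w) = lin (resid k aL c) w + (c k / aL k) * bL := by
  have hsplit : lin c (phi k aL bL w)
      = c k * phi k aL bL w k + ∑ j, c (k.succAbove j) * phi k aL bL w (k.succAbove j) :=
    Fin.sum_univ_succAbove (fun i => c i * phi k aL bL w i) k
  rw [hsplit]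
  simp only [phi, Fin.insertNth_apply_same, Fin.insertNth_apply_succAbove]
  have hres : lin (resid k aL c) w
      = ∑ j, c (k.succAbove j) * w j - (c k / aL k) * ∑ j, aL (k.succAbove j) * w j := by
    unfold lin resid
    rw [Finset.mul_sum, ← Finset.sum_sub_distrib]
    congr 1; funext j; ring
  rw [hres]
  field_simp
  ring

lemma lin_phi_sub (hk : aL k ≠ 0) (c : Fin (n + 1) → ℝ) (β : ℝ) (w : Fin n → ℝ) :
    lin c (phi k aL bL w) - β = lin (resid k aL c) w - (β - (c k / aL k) * bL) := by
  rw [lin_phi k aL bL hk c w]; ring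

lemma phi_mem (hk : aL k ≠ 0) (w : Fin n → ℝ) : lin aL (phi k aL bL w) = bL := by
  have hres : resid k aL aL = 0 := by
    funext j; unfold resid; field_simp; simp
  rw [lin_phi k aL bL hk aL w, hres]
  have : lin (0 : Fin n → ℝ) w = 0 := by simp [lin]
  rw [this]; field_simp; simp

lemma phi_inj : Function.Injective (phi k aL bL) := by
  intro w1 w2 h
  funext j
  have := congrFun h (k.succAbove j)
  simpa [phi, Fin.insertNth_apply_succAbove] using this

lemma phi_surj_on (hk : aL k ≠ 0) {z : Fin (n + 1) → ℝ} (hz : lin aL z = bL) :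
    phi k aL bL (fun j => z (k.succAbove j)) = z := by
  unfold phi
  have hsum : bL = aL k * z k + ∑ j, aL (k.succAbove j) * z (k.succAbove j) := by
    rw [← hz]; unfold lin
    exact Fin.sum_univ_succAbove (fun i => aL i * z i) k
  have hx : (bL - ∑ j, aL (k.succAbove j) * z (k.succAbove j)) / aL k = z k := by
    rw [hsum]; field_simp; ring
  rw [hx]
  funext i
  rcases eq_or_ne i k with rfl | hne
  · rw [Fin.insertNth_apply_same]
  · obtain ⟨j, hj⟩ := Fin.exists_succAbove_eq hne
    rw [← hj, Fin.insertNth_apply_succAbove]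

lemma range_phi (hk : aL k ≠ 0) : Set.range (phi k aL bL) = {z | lin aL z = bL} := by
  ext z
  constructor
  · rintro ⟨w, rfl⟩; exact phi_mem k aL bL hk w
  · intro hz; exact ⟨fun j => z (k.succAbove j), phi_surj_on k aL bL hk hz⟩

end Phi





lemma flats_finite (a : Fin p → Fin m → ℝ) (b : Fin p → ℝ) : (flats a b).Finite := by
  apply Set.Finite.subset (Set.finite_range
    (fun F : Finset (Fin p) => ⋂ i ∈ F, {z : Fin m → ℝ | lin (a i) z = b i}))
  rintro T ⟨-, F, rfl⟩
  exact ⟨F, rfl⟩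

lemma binter_castSucc {α : Type*} (S : Fin (p + 1) → Set α) (F : Finset (Fin (p + 1)))
    (hF : Fin.last p ∉ F) :
    (⋂ i ∈ F, S i)
      = ⋂ i ∈ Finset.univ.filter (fun i' : Fin p => i'.castSucc ∈ F), S i.castSucc := by
  ext z
  simp only [Set.mem_iInter, Finset.mem_filter, Finset.mem_univ, true_and]
  constructor
  · intro h i' hi'; exact h _ hi'
  · intro h i hi
    have hiL : i ≠ Fin.last p := fun e => hF (e ▸ hi)
    obtain ⟨i', rfl⟩ := Fin.exists_castSucc_eq.mpr hiL
    exact h i' hi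

lemma snoc_map_injective {f : (Fin p → Bool) → Bool} :
    Function.Injective (fun σ : Fin p → Bool => Fin.snoc σ (f σ) : (Fin p → Bool) → (Fin (p+1) → Bool)) := by
  intro x y h
  funext i
  have := congrFun h i.castSucc
  simpa [Fin.snoc_castSucc] using this

/-- Main induction: number of nonempty flats is at most number of realized sign vectors. -/
lemma flats_le_sigs : ∀ (p m : ℕ) (a : Fin p → Fin m → ℝ) (b : Fin p → ℝ),
    (∀ i, a i = 0 → b i ≠ 0) → (flats a b).ncard ≤ (sigs a b).ncard := by
  intro p
  induction p with
  | zero =>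
    intro m a b _
    have hflats : flats a b = {Set.univ} := by
      ext T
      simp only [flats, Set.mem_setOf_eq, Set.mem_singleton_iff]
      constructor
      · rintro ⟨hne, F, rfl⟩
        have : F = ∅ := Finset.eq_empty_of_isEmpty F
        subst this; simp
      · rintro rfl
        exact ⟨Set.univ_nonempty, ∅, by simp⟩
    rw [hflats, Set.ncard_singleton]
    have hne : (sigs a b).Nonempty := by
      refine ⟨fun _ => true, ⟨fun _ => 0, ?_⟩⟩
      intro i; exact i.elim0
    have := (Set.ncard_pos (Set.toFinite _)).mpr hne
    omega
  | succ p IH =>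
    intro m a b dh
    classical
    set L : Fin (p + 1) := Fin.last p with hLdef
    by_cases hL : a L = 0
    · -- Case 1 : the last hyperplane is empty
      have hbL : b L ≠ 0 := dh L hL
      have hsub : flats a b ⊆ flats (fun i : Fin p => a i.castSucc) (fun i => b i.castSucc) := by
        rintro T ⟨hne, F, rfl⟩
        have hLF : L ∉ F := by
          intro hLF
          obtain ⟨z, hz⟩ := hne
          have hzL : z ∈ {z : Fin m → ℝ | lin (a L) z = b L} :=
            Set.biInter_subset_of_mem hLF hz
          rw [Set.mem_setOf_eq, hL, lin_zero_left] at hzL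
          exact hbL hzL.symm
        exact ⟨hne, _, binter_castSucc _ F hLF⟩
      have hsigs : (sigs (fun i : Fin p => a i.castSucc) (fun i => b i.castSucc)).ncard
          ≤ (sigs a b).ncard := by
        set g : (Fin p → Bool) → (Fin (p+1) → Bool) :=
          fun σ' => Fin.snoc σ' (decide (b L < 0)) with hg
        have hginj : Function.Injective g := snoc_map_injective
        have himg : g '' sigs (fun i : Fin p => a i.castSucc) (fun i => b i.castSucc)
            ⊆ sigs a b := by
          rintro σ ⟨σ', ⟨z, hz⟩, rfl⟩
          refine ⟨z, ?_⟩
          intro i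
          induction i using Fin.lastCases with
          | last =>
            have hlin : lin (a L) z = 0 := by rw [hL, lin_zero_left]
            simp only [hg, Fin.snoc_last, decide_eq_true_eq]
            by_cases hb : b L < 0
            · rw [if_pos hb, hlin]; exact hb
            · rw [if_neg hb, hlin]
              exact lt_of_le_of_ne (not_lt.mp hb) (Ne.symm hbL)
          | cast i =>
            simp only [hg, Fin.snoc_castSucc]
            exact hz i
        calc (sigs (fun i : Fin p => a i.castSucc) (fun i => b i.castSucc)).ncard
            = (g '' sigs (fun i : Fin p => a i.castSucc) (fun i => b i.castSucc)).ncard :=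
              (Set.ncard_image_of_injective _ hginj).symm
          _ ≤ (sigs a b).ncard := Set.ncard_le_ncard himg (Set.toFinite _)
      calc (flats a b).ncard
          ≤ (flats (fun i : Fin p => a i.castSucc) (fun i => b i.castSucc)).ncard :=
            Set.ncard_le_ncard hsub (flats_finite _ _)
        _ ≤ (sigs (fun i : Fin p => a i.castSucc) (fun i => b i.castSucc)).ncard :=
            IH m _ _ (fun i h => dh i.castSucc h)
        _ ≤ (sigs a b).ncard := hsigs
    · by_cases hdup : ∃ i : Fin p, ∀ z, lin (a L) z = b L →
          lin (a i.castSucc) z = b i.castSucc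
      · -- Case 2 : the last hyperplane is a duplicate
        obtain ⟨i0, hi0⟩ := hdup
        obtain ⟨t, hta, htb⟩ := prop_of_subset hL hi0
        have ht0 : t ≠ 0 := by
          rintro rfl
          refine dh i0.castSucc ?_ ?_
          · rw [hta, zero_smul]
          · rw [htb, zero_mul]
        have hHeq : ∀ z, lin (a i0.castSucc) z = b i0.castSucc ↔ lin (a L) z = b L := by
          intro z
          rw [hta, lin_smul_left, htb]
          constructor
          · intro h; exact mul_left_cancel₀ ht0 h
          · intro h; rw [h]
        have hsub : flats a b ⊆ flats (fun i : Fin p => a i.castSucc) (fun i => b i.castSucc) := by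
          rintro T ⟨hne, F, rfl⟩
          by_cases hLF : L ∈ F
          · refine ⟨hne, insert i0 (Finset.univ.filter (fun i' : Fin p => i'.castSucc ∈ F)), ?_⟩
            ext z
            simp only [Set.mem_iInter, Finset.mem_insert, Finset.mem_filter,
              Finset.mem_univ, true_and, Set.mem_setOf_eq]
            constructor
            · intro hz i' hi'
              rcases hi' with rfl | hmem
              · exact (hHeq z).mpr (hz L hLF)
              · exact hz _ hmem
            · intro hz i hi
              rcases eq_or_ne i L with rfl | hiL
              · exact (hHeq z).mp (hz i0 (Or.inl rfl))
              · obtain ⟨i', rfl⟩ := Fin.exists_castSucc_eq.mpr hiL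
                exact hz i' (Or.inr hi)
          · exact ⟨hne, _, binter_castSucc _ F hLF⟩
        have hsigs : (sigs (fun i : Fin p => a i.castSucc) (fun i => b i.castSucc)).ncard
            ≤ (sigs a b).ncard := by
          set g : (Fin p → Bool) → (Fin (p+1) → Bool) :=
            fun σ' => Fin.snoc σ' (if 0 < t then σ' i0 else !σ' i0) with hg
          have hginj : Function.Injective g := snoc_map_injective
          have himg : g '' sigs (fun i : Fin p => a i.castSucc) (fun i => b i.castSucc)
              ⊆ sigs a b := by
            rintro σ ⟨σ', ⟨z, hz⟩, rfl⟩
            refine ⟨z, ?_⟩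
            intro i
            induction i using Fin.lastCases with
            | last =>
              have hz0 : (if σ' i0 = true then b i0.castSucc < lin (a i0.castSucc) z
                  else lin (a i0.castSucc) z < b i0.castSucc) := hz i0
              have hlineq : lin (a i0.castSucc) z = t * lin (a L) z := by
                rw [hta, lin_smul_left]
              rw [hlineq, htb] at hz0
              simp only [hg, Fin.snoc_last]
              rcases lt_or_gt_of_ne ht0 with htneg | htpos
              · rw [if_neg (not_lt.mpr (le_of_lt htneg))]
                cases hσ : σ' i0
                · rw [hσ, if_neg (by simp)] at hz0
                  rw [if_pos (by simp)]
                  nlinarith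
                · rw [hσ, if_pos rfl] at hz0
                  rw [if_neg (by simp)]
                  nlinarith
              · rw [if_pos htpos]
                cases hσ : σ' i0
                · rw [hσ, if_neg (by simp)] at hz0
                  rw [if_neg (by simp)]
                  nlinarith
                · rw [hσ, if_pos rfl] at hz0
                  rw [if_pos rfl]
                  nlinarith
            | cast i =>
              simp only [hg, Fin.snoc_castSucc]
              exact hz i
          calc (sigs (fun i : Fin p => a i.castSucc) (fun i => b i.castSucc)).ncard
              = (g '' sigs (fun i : Fin p => a i.castSucc) (fun i => b i.castSucc)).ncard :=
                (Set.ncard_image_of_injective _ hginj).symm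
            _ ≤ (sigs a b).ncard := Set.ncard_le_ncard himg (Set.toFinite _)
        calc (flats a b).ncard
            ≤ (flats (fun i : Fin p => a i.castSucc) (fun i => b i.castSucc)).ncard :=
              Set.ncard_le_ncard hsub (flats_finite _ _)
          _ ≤ (sigs (fun i : Fin p => a i.castSucc) (fun i => b i.castSucc)).ncard :=
              IH m _ _ (fun i h => dh i.castSucc h)
          _ ≤ (sigs a b).ncard := hsigs
      · -- Case 3 : genuinely new hyperplane
        push_neg at hdup
        have hnd : ∀ i : Fin p, ∃ z, lin (a L) z = b L ∧
            lin (a i.castSucc) z ≠ b i.castSucc := hdup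
        obtain ⟨k0, hk0⟩ : ∃ k0, a L k0 ≠ 0 := Function.ne_iff.mp hL
        have hm : m ≠ 0 := by rintro rfl; exact k0.elim0
        obtain ⟨n, rfl⟩ : ∃ n, m = n + 1 := ⟨m - 1, by omega⟩
        set k : Fin (n + 1) := k0 with hkdef
        have hk : a L k ≠ 0 := hk0
        set A2 : Fin p → Fin n → ℝ := fun i => resid k (a L) (a i.castSucc) with hA2
        set b2 : Fin p → ℝ := fun i => b i.castSucc - (a i.castSucc k / a L k) * b L with hb2
        have key_iff : ∀ (i : Fin p) (w : Fin n → ℝ),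
            lin (a i.castSucc) (phi k (a L) (b L) w) - b i.castSucc
              = lin (A2 i) w - b2 i := by
          intro i w
          have := lin_phi_sub k (a L) (b L) hk (a i.castSucc) (b i.castSucc) w
          rw [this]
        have dh2 : ∀ i, A2 i = 0 → b2 i ≠ 0 := by
          intro i h0 hb0
          obtain ⟨z, hz1, hz2⟩ := hnd i
          have hφ : phi k (a L) (b L) (fun j => z (k.succAbove j)) = z :=
            phi_surj_on k (a L) (b L) hk hz1
          have := key_iff i (fun j => z (k.succAbove j))
          rw [hφ, h0, hb0, lin_zero_left, sub_zero] at this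
          exact hz2 (by linarith [this])
        -- flats inequality
        have hsub : flats a b ⊆ flats (fun i : Fin p => a i.castSucc) (fun i => b i.castSucc)
            ∪ (Set.image (phi k (a L) (b L))) '' flats A2 b2 := by
          rintro T ⟨hne, F, hTeq⟩
          by_cases hT' : T ∈ flats (fun i : Fin p => a i.castSucc) (fun i => b i.castSucc)
          · exact Or.inl hT'
          · right
            have hLF : L ∈ F := by
              by_contra hLF
              exact hT' ⟨hne, _, hTeq.trans (binter_castSucc _ F hLF)⟩
            have hTH : T ⊆ {z | lin (a L) z = b L} := by
              rw [hTeq]; exact Set.biInter_subset_of_mem hLF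
            have hTrange : T ⊆ Set.range (phi k (a L) (b L)) := by
              rw [range_phi k (a L) (b L) hk]; exact hTH
            refine ⟨phi k (a L) (b L) ⁻¹' T, ⟨?_, ?_⟩,
              Set.image_preimage_eq_of_subset hTrange⟩
            · obtain ⟨x, hx⟩ := hne
              obtain ⟨w, rfl⟩ := hTrange hx
              exact ⟨w, hx⟩
            · refine ⟨Finset.univ.filter (fun i' : Fin p => i'.castSucc ∈ F), ?_⟩
              ext w
              simp only [Set.mem_preimage, hTeq, Set.mem_iInter, Finset.mem_filter,
                Finset.mem_univ, true_and, Set.mem_setOf_eq]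
              constructor
              · intro h i' hi'
                have := h i'.castSucc hi'
                have hk2 := key_iff i' w
                rw [this] at hk2
                simp only [sub_self] at hk2
                linarith [hk2]
              · intro h i hi
                rcases eq_or_ne i L with rfl | hiL
                · exact phi_mem k (a L) (b L) hk w
                · obtain ⟨i', rfl⟩ := Fin.exists_castSucc_eq.mpr hiL
                  have := h i' hi
                  have hk2 := key_iff i' w
                  rw [this] at hk2
                  simp only [sub_self] at hk2
                  linarith [hk2]
        -- sigs inequality
        set cb : (Fin p → Bool) → Bool := fun σ' =>
          if h : ∃ z ∈ cell (fun i : Fin p => a i.castSucc) (fun i => b i.castSucc) σ',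
              lin (a L) z ≠ b L
          then decide (b L < lin (a L) h.choose) else true with hcb
        set g1 : (Fin p → Bool) → (Fin (p+1) → Bool) := fun σ' => Fin.snoc σ' (cb σ') with hg1
        set g2 : (Fin p → Bool) → (Fin (p+1) → Bool) := fun σ' => Fin.snoc σ' (!cb σ') with hg2
        have hg1inj : Function.Injective g1 := snoc_map_injective
        have hg2inj : Function.Injective g2 := snoc_map_injective
        have hE1 : g1 '' sigs (fun i : Fin p => a i.castSucc) (fun i => b i.castSucc)
            ⊆ sigs a b := by
          rintro σ ⟨σ', ⟨z0, hz0⟩, rfl⟩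
          have hex : ∃ z ∈ cell (fun i : Fin p => a i.castSucc) (fun i => b i.castSucc) σ',
              lin (a L) z ≠ b L :=
            perturb_ne (cell_isOpen _ _ _) hz0 hL (b L)
          obtain ⟨hz1, hz2⟩ := hex.choose_spec
          refine ⟨hex.choose, ?_⟩
          intro i
          induction i using Fin.lastCases with
          | last =>
            simp only [hg1, Fin.snoc_last, hcb, dif_pos hex, decide_eq_true_eq]
            by_cases hlt : b L < lin (a L) hex.choose
            · rw [if_pos hlt]; exact hlt
            · rw [if_neg hlt]
              exact lt_of_le_of_ne (not_lt.mp hlt) hz2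
          | cast i =>
            simp only [hg1, Fin.snoc_castSucc]
            exact hz1 i
        have hE2 : g2 '' sigs A2 b2 ⊆ sigs a b := by
          rintro σ ⟨σ'', ⟨w0, hw0⟩, rfl⟩
          set z : Fin (n+1) → ℝ := phi k (a L) (b L) w0 with hzdef
          have hz1 : lin (a L) z = b L := phi_mem k (a L) (b L) hk w0
          have hzcell : z ∈ cell (fun i : Fin p => a i.castSucc) (fun i => b i.castSucc) σ'' := by
            intro i
            have hw : (if σ'' i = true then b2 i < lin (A2 i) w0
                else lin (A2 i) w0 < b2 i) := hw0 i
            have hk2 := key_iff i w0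
            rw [← hzdef] at hk2
            show (if σ'' i = true then b i.castSucc < lin (a i.castSucc) z
                else lin (a i.castSucc) z < b i.castSucc)
            by_cases hσ : σ'' i = true
            · rw [if_pos hσ] at hw ⊢
              linarith
            · rw [if_neg hσ] at hw ⊢
              linarith
          obtain ⟨⟨zp, hzp, hzpgt⟩, ⟨zm, hzm, hzmlt⟩⟩ :=
            perturb (cell_isOpen _ _ _) hzcell hL hz1
          cases hcbv : cb σ'' with
          | true =>
            refine ⟨zm, ?_⟩
            intro i
            induction i using Fin.lastCases with
            | last => simp only [hg2, Fin.snoc_last, hcbv, Bool.not_true, if_false]; exact hzmlt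
            | cast i =>
              simp only [hg2, Fin.snoc_castSucc]
              exact hzm i
          | false =>
            refine ⟨zp, ?_⟩
            intro i
            induction i using Fin.lastCases with
            | last => simp only [hg2, Fin.snoc_last, hcbv, Bool.not_false, if_true]; exact hzpgt
            | cast i =>
              simp only [hg2, Fin.snoc_castSucc]
              exact hzp i
        have hdisj : Disjoint
            (g1 '' sigs (fun i : Fin p => a i.castSucc) (fun i => b i.castSucc))
            (g2 '' sigs A2 b2) := by
          rw [Set.disjoint_left]
          rintro σ ⟨σ1, _, rfl⟩ ⟨σ2, _, heq⟩
          have h1 : σ2 = σ1 := by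
            funext i
            have := congrFun heq i.castSucc
            simpa [hg1, hg2, Fin.snoc_castSucc] using this
          have h2 := congrFun heq (Fin.last p)
          rw [h1] at h2
          simp only [hg1, hg2, Fin.snoc_last] at h2
          cases hv : cb σ1 <;> rw [hv] at h2 <;> simp at h2
        have hsigs : (sigs (fun i : Fin p => a i.castSucc) (fun i => b i.castSucc)).ncard
            + (sigs A2 b2).ncard ≤ (sigs a b).ncard := by
          calc (sigs (fun i : Fin p => a i.castSucc) (fun i => b i.castSucc)).ncard
                + (sigs A2 b2).ncard
              = (g1 '' sigs (fun i : Fin p => a i.castSucc) (fun i => b i.castSucc)).ncard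
                + (g2 '' sigs A2 b2).ncard := by
                rw [Set.ncard_image_of_injective _ hg1inj, Set.ncard_image_of_injective _ hg2inj]
            _ = ((g1 '' sigs (fun i : Fin p => a i.castSucc) (fun i => b i.castSucc))
                ∪ (g2 '' sigs A2 b2)).ncard := by
                rw [Set.ncard_union_eq hdisj (Set.toFinite _) (Set.toFinite _)]
            _ ≤ (sigs a b).ncard :=
                Set.ncard_le_ncard (Set.union_subset hE1 hE2) (Set.toFinite _)
        calc (flats a b).ncard
            ≤ ((flats (fun i : Fin p => a i.castSucc) (fun i => b i.castSucc))
              ∪ (Set.image (phi k (a L) (b L))) '' flats A2 b2).ncard :=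
              Set.ncard_le_ncard hsub ((flats_finite _ _).union ((flats_finite _ _).image _))
          _ ≤ (flats (fun i : Fin p => a i.castSucc) (fun i => b i.castSucc)).ncard
              + ((Set.image (phi k (a L) (b L))) '' flats A2 b2).ncard :=
              Set.ncard_union_le _ _
          _ ≤ (flats (fun i : Fin p => a i.castSucc) (fun i => b i.castSucc)).ncard
              + (flats A2 b2).ncard := by
              have := Set.ncard_image_le (s := flats A2 b2)
                (f := Set.image (phi k (a L) (b L))) (flats_finite _ _)
              omega
          _ ≤ (sigs (fun i : Fin p => a i.castSucc) (fun i => b i.castSucc)).ncard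
              + (sigs A2 b2).ncard := by
              have h1 := IH (n+1) _ _ (fun i h => dh i.castSucc h)
              have h2 := IH n A2 b2 dh2
              omega
          _ ≤ (sigs a b).ncard := hsigs

end

end RegionsLB

theorem regions_lower_bound (p m : ℕ)
    (a : Fin p → Fin m → ℝ) (b : Fin p → ℝ) (ha : ∀ i, a i ≠ 0) :
    Set.ncard {T : Set (Fin m → ℝ) | T.Nonempty ∧
        ∃ F : Finset (Fin p), T = ⋂ i ∈ F, {z : Fin m → ℝ | ∑ j, a i j * z j = b i}} ≤
      Nat.card (ConnectedComponents
        {z : Fin m → ℝ | ∀ i : Fin p, (∑ j, a i j * z j) ≠ b i}) := by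
  have h1 := RegionsLB.flats_le_sigs p m a b (fun i h => absurd h (ha i))
  have h2 := RegionsLB.sigs_le_components a b
  exact le_trans h1 h2
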